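/- Let S be a finite set of primes, let (r_k)_{k≥1} be a periodic sequence of positive real numbers, and for each p ∈ S let (s_{p,k})_{k≥1} and (t_{p,k})_{k≥1} be periodic sequences of nonnegative real numbers whose periods are coprime to p. Define b̃_k := r_k · ∏_{p ∈ S} |k|_p^{s_{p,k}} · p^{−t_{p,k}·|k|_p^{−1}}. Then for every Θ ∈ ℝ, the Cesàro mean L(Θ) := 𝒞(b̃_k e^{ikΘ}) = lim_{X→∞} (1/X) Σ_{k ≤ X} b̃_k e^{ikΘ} exists (as a complex number); moreover L(Θ) = 0 unless Θ ∈ 2πℚ. -/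

import Mathlib

open Filter Topology Real

noncomputable section


lemma geom_norm_le (z : ℂ) (hz : ‖z‖ ≤ 1) (hz1 : z ≠ 1) (n : ℕ) :
    ‖∑ i ∈ Finset.range n, z ^ i‖ ≤ 2 / ‖1 - z‖ := by
  have h1 : z - 1 ≠ 0 := sub_ne_zero.mpr hz1
  rw [geom_sum_eq hz1]
  rw [norm_div]
  have hnum : ‖z ^ n - 1‖ ≤ 2 := by
    calc ‖z ^ n - 1‖ ≤ ‖z ^ n‖ + ‖(1 : ℂ)‖ := norm_sub_le _ _
    _ ≤ 1 + 1 := by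
        rw [norm_pow, norm_one]
        exact add_le_add (pow_le_one₀ (norm_nonneg z) hz) le_rfl
    _ = 2 := by norm_num
  have h2 : ‖z - 1‖ = ‖1 - z‖ := norm_sub_rev _ _
  rw [h2]
  have h3 : (0:ℝ) < ‖1 - z‖ := by
    rw [norm_pos_iff]
    exact sub_ne_zero.mpr (Ne.symm hz1)
  gcongr

lemma tendsto_of_approx (f : ℕ → ℂ)
    (h : ∀ ε : ℝ, 0 < ε → ∃ g : ℕ → ℂ, (∃ L', Tendsto g atTop (𝓝 L')) ∧
      ∀ᶠ X in atTop, ‖f X - g X‖ ≤ ε) :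
    ∃ L, Tendsto f atTop (𝓝 L) := by
  have hc : CauchySeq f := by
    rw [Metric.cauchySeq_iff]
    intro ε hε
    obtain ⟨g, ⟨L', hg⟩, hfg⟩ := h (ε/3) (by linarith)
    have hgc : CauchySeq g := hg.cauchySeq
    rw [Metric.cauchySeq_iff] at hgc
    obtain ⟨N1, hN1⟩ := hgc (ε/3) (by linarith)
    obtain ⟨N2, hN2⟩ := eventually_atTop.mp hfg
    refine ⟨max N1 N2, fun m hm n hn => ?_⟩
    have hmid := hN1 m (le_of_max_le_left hm) n (le_of_max_le_left hn)
    have h1 := hN2 m (le_of_max_le_right hm)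
    have h2 := hN2 n (le_of_max_le_right hn)
    have h1' : dist (f m) (g m) ≤ ε/3 := by rwa [dist_eq_norm]
    have h2' : dist (g n) (f n) ≤ ε/3 := by rw [dist_comm, dist_eq_norm]; exact h2
    calc dist (f m) (f n) ≤ dist (f m) (g m) + dist (g m) (g n) + dist (g n) (f n) :=
          dist_triangle4 _ _ _ _
    _ < ε := by linarith
  exact cauchySeq_tendsto_of_complete hc

lemma limit_zero_of_approx (f : ℕ → ℂ) (L : ℂ) (hf : Tendsto f atTop (𝓝 L))
    (h : ∀ ε : ℝ, 0 < ε → ∃ g : ℕ → ℂ, Tendsto g atTop (𝓝 (0:ℂ)) ∧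
      ∀ᶠ X in atTop, ‖f X - g X‖ ≤ ε) : L = 0 := by
  have key : ∀ ε : ℝ, 0 < ε → ‖L‖ ≤ ε := by
    intro ε hε
    obtain ⟨g, hg, hfg⟩ := h ε hε
    have hdiff : Tendsto (fun X => ‖f X - g X‖) atTop (𝓝 ‖L - 0‖) :=
      ((hf.sub hg).norm)
    rw [sub_zero] at hdiff
    exact le_of_tendsto hdiff hfg
  by_contra hL
  have : (0:ℝ) < ‖L‖ := norm_pos_iff.mpr hL
  have := key (‖L‖/2) (by linarith)
  linarith


lemma geom_norm_le' (z : ℂ) (hz : ‖z‖ ≤ 1) (hz1 : z ≠ 1) (n : ℕ) :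
    ‖∑ i ∈ Finset.range n, z ^ i‖ ≤ 2 / ‖1 - z‖ := by
  rw [geom_sum_eq hz1, norm_div]
  have hnum : ‖z ^ n - 1‖ ≤ 2 := by
    calc ‖z ^ n - 1‖ ≤ ‖z ^ n‖ + ‖(1 : ℂ)‖ := norm_sub_le _ _
    _ ≤ 1 + 1 := by
        rw [norm_pow, norm_one]
        exact add_le_add (pow_le_one₀ (norm_nonneg z) hz) le_rfl
    _ = 2 := by norm_num
  rw [norm_sub_rev z 1]
  have h3 : (0:ℝ) < ‖1 - z‖ := by
    rw [norm_pos_iff]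
    exact sub_ne_zero.mpr (Ne.symm hz1)
  gcongr

lemma div_cast_tendsto (M : ℕ) (hM : 0 < M) :
    Tendsto (fun X : ℕ => (((X + 1) / M : ℕ) : ℝ) / (X : ℝ)) atTop (𝓝 (1 / M)) := by
  have hb : ∀ X : ℕ, 1 ≤ X → |(((X+1)/M : ℕ) : ℝ) / X - 1/M| ≤ (1 : ℝ)/X := by
    intro X hX
    have hdm : M * ((X+1)/M) + (X+1) % M = X + 1 := Nat.div_add_mod (X+1) M
    have hrlt : (X+1) % M < M := Nat.mod_lt _ hM
    set q : ℕ := (X+1)/M with hq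
    have h1 : M * q ≤ X + 1 := by omega
    have h2 : X + 1 < M * q + M := by omega
    have h1' : (M:ℝ) * q ≤ X + 1 := by exact_mod_cast h1
    have h2' : (X:ℝ) + 1 < M * q + M := by exact_mod_cast h2
    have hX' : (1:ℝ) ≤ X := by exact_mod_cast hX
    have hM' : (1:ℝ) ≤ M := by exact_mod_cast hM
    have hXpos : (0:ℝ) < X := by linarith
    have heq : ((q:ℝ)) / X - 1/M = ((M:ℝ)*q - X) / (M * X) := by
      field_simp
    rw [heq, abs_div, abs_of_pos (by positivity : (0:ℝ) < M * X)]
    rw [div_le_div_iff₀ (by positivity) hXpos]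
    have habs : |(M:ℝ)*q - X| ≤ M := by
      rw [abs_le]; constructor <;> linarith
    calc |(M:ℝ)*q - X| * X ≤ M * X := mul_le_mul_of_nonneg_right habs (le_of_lt hXpos)
    _ = 1 * (M * X) := by ring
  have h0 : Tendsto (fun X : ℕ => (1:ℝ)/X) atTop (𝓝 0) := tendsto_one_div_atTop_nhds_zero_nat
  have key : Tendsto (fun X : ℕ => (((X+1)/M : ℕ) : ℝ) / X - 1/M) atTop (𝓝 0) := by
    apply squeeze_zero_norm' _ h0
    filter_upwards [eventually_ge_atTop 1] with X hX
    exact hb X hX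
  have := key.add (tendsto_const_nhds (x := (1:ℝ)/M))
  simpa using this

lemma periodic_cesaro (M : ℕ) (hM : 0 < M) (g : ℕ → ℂ) (w : ℂ) (hw : ‖w‖ = 1)
    (h : ℕ → ℂ) (hh : ∀ k, h k = g (k % M) * w ^ k) :
    ∃ L : ℂ, Tendsto (fun X : ℕ =>
        (∑ k ∈ Finset.Icc 1 X, h k) / (X : ℂ)) atTop (𝓝 L)
      ∧ (w ^ M ≠ 1 → L = 0) := by
  set C : ℂ := ∑ j ∈ Finset.range M, g j * w ^ j with hC
  set B : ℝ := ∑ j ∈ Finset.range M, ‖g j‖ with hB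
  have hB0 : 0 ≤ B := Finset.sum_nonneg fun j _ => norm_nonneg _
  have hgB : ∀ n : ℕ, ‖g (n % M)‖ ≤ B := fun n =>
    Finset.single_le_sum (f := fun j => ‖g j‖) (fun j _ => norm_nonneg _)
      (Finset.mem_range.mpr (Nat.mod_lt n hM))
  have hhB : ∀ n : ℕ, ‖h n‖ ≤ B := by
    intro n
    rw [hh]
    calc ‖g (n % M) * w ^ n‖ = ‖g (n % M)‖ * ‖w‖ ^ n := by rw [norm_mul, norm_pow]
    _ = ‖g (n % M)‖ := by rw [hw, one_pow, mul_one]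
    _ ≤ B := hgB n
  have claim1 : ∀ q : ℕ, ∑ k ∈ Finset.range (q * M), h k
      = (∑ i ∈ Finset.range q, (w ^ M) ^ i) * C := by
    intro q
    induction q with
    | zero => simp
    | succ q ih =>
      have he : (q + 1) * M = q * M + M := by ring
      rw [he, Finset.sum_range_add, ih, Finset.sum_range_succ, add_mul]
      congr 1
      have hpt : ∀ j ∈ Finset.range M, h (q * M + j) = (w ^ M) ^ q * (g j * w ^ j) := by
        intro j hj
        have hjM := Finset.mem_range.mp hj
        have hmod : (q * M + j) % M = j := by
          have he2 : q * M + j = j + M * q := by ring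
          rw [he2, Nat.add_mul_mod_self_left, Nat.mod_eq_of_lt hjM]
        rw [hh, hmod, pow_add, pow_mul]
        ring
      rw [Finset.sum_congr rfl hpt, ← Finset.mul_sum, hC]
  have hIcc : ∀ X : ℕ, ∑ k ∈ Finset.range (X + 1), h k = h 0 + ∑ k ∈ Finset.Icc 1 X, h k := by
    intro X
    induction X with
    | zero => simp
    | succ X ih =>
      rw [Finset.sum_range_succ, ih, Finset.sum_Icc_succ_top (by omega : 1 ≤ X + 1)]
      ring
  have claim2 : ∀ X : ℕ, ‖(∑ k ∈ Finset.Icc 1 X, h k)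
      - (∑ i ∈ Finset.range ((X+1) / M), (w ^ M) ^ i) * C‖ ≤ (M + 1) * B := by
    intro X
    have hdm : M * ((X+1)/M) + (X+1) % M = X + 1 := Nat.div_add_mod (X+1) M
    set q : ℕ := (X + 1) / M with hq
    set rr : ℕ := (X + 1) % M with hrr
    have hXqr : X + 1 = q * M + rr := by rw [mul_comm]; omega
    have hsum : ∑ k ∈ Finset.range (X+1), h k
        = (∑ i ∈ Finset.range q, (w ^ M) ^ i) * C + ∑ j ∈ Finset.range rr, h (q * M + j) := by
      rw [hXqr, Finset.sum_range_add, claim1]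
    have hkey : ∑ k ∈ Finset.Icc 1 X, h k - (∑ i ∈ Finset.range q, (w ^ M) ^ i) * C
        = ∑ j ∈ Finset.range rr, h (q * M + j) - h 0 := by
      have h5 := hIcc X
      rw [hsum] at h5
      linear_combination -h5
    rw [hkey]
    have h1 : ‖∑ j ∈ Finset.range rr, h (q * M + j)‖ ≤ rr * B := by
      calc ‖∑ j ∈ Finset.range rr, h (q * M + j)‖ ≤ ∑ j ∈ Finset.range rr, ‖h (q * M + j)‖ :=
            norm_sum_le _ _
      _ ≤ ∑ _j ∈ Finset.range rr, B := Finset.sum_le_sum fun j _ => hhB _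
      _ = rr * B := by rw [Finset.sum_const, Finset.card_range, nsmul_eq_mul]
    have hrM : (rr:ℝ) ≤ M := by exact_mod_cast le_of_lt (Nat.mod_lt _ hM)
    calc ‖∑ j ∈ Finset.range rr, h (q * M + j) - h 0‖
        ≤ ‖∑ j ∈ Finset.range rr, h (q * M + j)‖ + ‖h 0‖ := norm_sub_le _ _
    _ ≤ rr * B + B := add_le_add h1 (hhB 0)
    _ ≤ M * B + B := by nlinarith
    _ = (M + 1) * B := by ring
  by_cases hwM : w ^ M = 1
  · refine ⟨C / M, ?_, fun hc => (hc hwM).elim⟩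
    have hG : ∀ X : ℕ, (∑ i ∈ Finset.range ((X+1)/M), (w ^ M) ^ i) = (((X+1)/M : ℕ) : ℂ) := by
      intro X; simp [hwM]
    have hmain : Tendsto (fun X : ℕ => (((X+1)/M : ℕ) : ℂ) * C / X) atTop (𝓝 (C / M)) := by
      have hre := div_cast_tendsto M hM
      have hcx : Tendsto (fun X : ℕ => (((((X+1)/M : ℕ) : ℝ) / X : ℝ) : ℂ)) atTop
          (𝓝 (((1/M : ℝ) : ℂ))) := (Complex.continuous_ofReal.tendsto _).comp hre
      have hmul := hcx.mul_const C
      have heq : (fun X : ℕ => (((((X+1)/M : ℕ) : ℝ) / X : ℝ) : ℂ) * C)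
          = fun X : ℕ => (((X+1)/M : ℕ) : ℂ) * C / X := by
        funext X
        push_cast
        ring
      rw [heq] at hmul
      convert hmul using 2
      push_cast
      ring
    have herr : Tendsto (fun X : ℕ =>
        (∑ k ∈ Finset.Icc 1 X, h k) / X - (((X+1)/M : ℕ) : ℂ) * C / X) atTop (𝓝 0) := by
      apply squeeze_zero_norm' _
        (by simpa using tendsto_one_div_atTop_nhds_zero_nat.const_mul ((M + 1) * B) :
          Tendsto (fun X : ℕ => (M + 1) * B * (1/X)) atTop (𝓝 0))
      filter_upwards [eventually_ge_atTop 1] with X hX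
      have hXpos : (0:ℝ) < X := by exact_mod_cast Nat.pos_of_ne_zero (by omega)
      have hX0 : (X:ℂ) ≠ 0 := Nat.cast_ne_zero.mpr (by omega)
      have hdiv : (∑ k ∈ Finset.Icc 1 X, h k) / X - (((X+1)/M : ℕ) : ℂ) * C / X
          = ((∑ k ∈ Finset.Icc 1 X, h k) - (((X+1)/M : ℕ) : ℂ) * C) / X := by
        field_simp
      rw [hdiv, norm_div, Complex.norm_natCast, div_le_iff₀ hXpos]
      have h2 := claim2 X
      rw [hG X] at h2
      calc ‖(∑ k ∈ Finset.Icc 1 X, h k) - (((X+1)/M : ℕ) : ℂ) * C‖ ≤ (M + 1) * B := h2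
      _ = (M + 1) * B * (1/X) * X := by field_simp
    have hfin := herr.add hmain
    rw [zero_add] at hfin
    convert hfin using 2 with X
    ring
  · refine ⟨0, ?_, fun _ => rfl⟩
    have hK : ∀ X : ℕ, ‖∑ i ∈ Finset.range ((X+1)/M), (w ^ M) ^ i‖ ≤ 2 / ‖1 - w ^ M‖ :=
      fun X => geom_norm_le' (w ^ M) (by rw [norm_pow, hw, one_pow]) hwM _
    set K : ℝ := 2 / ‖1 - w ^ M‖ * ‖C‖ + (M + 1) * B with hKdef
    apply squeeze_zero_norm' _
      (by simpa using tendsto_one_div_atTop_nhds_zero_nat.const_mul K :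
        Tendsto (fun X : ℕ => K * (1/X)) atTop (𝓝 0))
    filter_upwards [eventually_ge_atTop 1] with X hX
    have hXpos : (0:ℝ) < X := by exact_mod_cast Nat.pos_of_ne_zero (by omega)
    rw [norm_div, Complex.norm_natCast, div_le_iff₀ hXpos]
    have hb : ‖∑ k ∈ Finset.Icc 1 X, h k‖ ≤ K := by
      have heq : ∑ k ∈ Finset.Icc 1 X, h k
          = ((∑ k ∈ Finset.Icc 1 X, h k)
              - (∑ i ∈ Finset.range ((X+1)/M), (w ^ M) ^ i) * C)
            + (∑ i ∈ Finset.range ((X+1)/M), (w ^ M) ^ i) * C := by ring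
      calc ‖∑ k ∈ Finset.Icc 1 X, h k‖
          ≤ ‖(∑ k ∈ Finset.Icc 1 X, h k)
              - (∑ i ∈ Finset.range ((X+1)/M), (w ^ M) ^ i) * C‖
            + ‖(∑ i ∈ Finset.range ((X+1)/M), (w ^ M) ^ i) * C‖ := by
            nth_rewrite 1 [heq]; exact norm_add_le _ _
      _ ≤ (M + 1) * B + 2 / ‖1 - w ^ M‖ * ‖C‖ := by
            refine add_le_add (claim2 X) ?_
            rw [norm_mul]
            exact mul_le_mul_of_nonneg_right (hK X) (norm_nonneg _)
      _ = K := by rw [hKdef]; ring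
    calc ‖∑ k ∈ Finset.Icc 1 X, h k‖ ≤ K := hb
    _ = K * (1/X) * X := by field_simp


lemma per_mul {α : Type*} (ρ : ℕ → α) (pd : ℕ)
    (hper : ∀ k, 1 ≤ k → ρ (k + pd) = ρ k) (m : ℕ) :
    ∀ k, 1 ≤ k → ρ (k + pd * m) = ρ k := by
  induction m with
  | zero => intro k hk; simp
  | succ m ih =>
    intro k hk
    have : k + pd * (m + 1) = (k + pd * m) + pd := by ring
    rw [this, hper _ (by omega), ih k hk]

lemma per_dvd {α : Type*} (ρ : ℕ → α) (pd M : ℕ) (hdvd : pd ∣ M)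
    (hper : ∀ k, 1 ≤ k → ρ (k + pd) = ρ k) :
    ∀ k, 1 ≤ k → ρ (k + M) = ρ k := by
  obtain ⟨m, rfl⟩ := hdvd
  exact per_mul ρ pd hper m

lemma padic_stable (p : ℕ) (hp : p.Prime) (V k M : ℕ) (hk : 1 ≤ k)
    (hndvd : ¬ p ^ V ∣ k) (hdvd : p ^ V ∣ M) :
    padicValNat p (k + M) = padicValNat p k := by
  haveI : Fact p.Prime := ⟨hp⟩
  set v := padicValNat p k with hv
  have hk0 : k ≠ 0 := by omega
  have hvV : v < V := by
    by_contra hc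
    push_neg at hc
    exact hndvd (dvd_trans (pow_dvd_pow p hc) (pow_padicValNat_dvd))
  have h1 : p ^ v ∣ k := pow_padicValNat_dvd
  have h2 : ¬ p ^ (v + 1) ∣ k := by
    intro hc
    have := (padicValNat_dvd_iff_le hk0).mp hc
    omega
  have h3 : p ^ v ∣ M := dvd_trans (pow_dvd_pow p (by omega)) hdvd
  have h4 : p ^ (v + 1) ∣ M := dvd_trans (pow_dvd_pow p (by omega)) hdvd
  have h5 : p ^ v ∣ k + M := dvd_add h1 h3
  have h6 : ¬ p ^ (v + 1) ∣ k + M := by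
    intro hc
    apply h2
    have := Nat.dvd_sub hc h4
    simpa using this
  have hkM0 : k + M ≠ 0 := by omega
  have hle : v ≤ padicValNat p (k + M) := (padicValNat_dvd_iff_le hkM0).mp h5
  have hlt : padicValNat p (k + M) < v + 1 := by
    by_contra hc
    push_neg at hc
    exact h6 ((padicValNat_dvd_iff_le hkM0).mpr hc)
  omega

-- representative within the first period
lemma per_rep (ρ : ℕ → ℝ) (pd : ℕ) (hpd : 0 < pd)
    (hper : ∀ k, 1 ≤ k → ρ (k + pd) = ρ k) :
    ∀ k, 1 ≤ k → ∃ j, 1 ≤ j ∧ j ≤ pd ∧ ρ k = ρ j := by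
  intro k
  induction k using Nat.strong_induction_on with
  | _ k ih =>
    intro hk
    by_cases hkpd : k ≤ pd
    · exact ⟨k, hk, hkpd, rfl⟩
    · push_neg at hkpd
      have h1 : 1 ≤ k - pd := by omega
      have h2 : k - pd < k := by omega
      obtain ⟨j, hj1, hj2, hj3⟩ := ih (k - pd) h2 h1
      refine ⟨j, hj1, hj2, ?_⟩
      have : ρ ((k - pd) + pd) = ρ (k - pd) := hper _ h1
      rw [Nat.sub_add_cancel (by omega)] at this
      rw [this, hj3]


/-- For every `Θ ∈ ℝ`, the Cesàro mean
`L(Θ) = lim (1/X) Σ_{k ≤ X} b̃_k e^{ikΘ}` of the twisted FAD-type sequence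
`b̃_k = r_k Π_{p ∈ S} |k|_p^{s_{p,k}} p^{-t_{p,k} |k|_p^{-1}}` exists, and `L(Θ) = 0`
unless `Θ ∈ 2πℚ`. -/
theorem fad_fourier_cesaro (S : Finset ℕ) (hS : ∀ p ∈ S, Nat.Prime p)
    (r : ℕ → ℝ) (hrpos : ∀ k, 1 ≤ k → 0 < r k)
    (ϖr : ℕ) (hϖr : 0 < ϖr) (hrper : ∀ k, 1 ≤ k → r (k + ϖr) = r k)
    (s t : ℕ → ℕ → ℝ)
    (hs0 : ∀ p ∈ S, ∀ k, 1 ≤ k → 0 ≤ s p k) (ht0 : ∀ p ∈ S, ∀ k, 1 ≤ k → 0 ≤ t p k)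
    (ϖs ϖt : ℕ → ℕ)
    (hϖs : ∀ p ∈ S, 0 < ϖs p ∧ Nat.Coprime (ϖs p) p ∧
      ∀ k, 1 ≤ k → s p (k + ϖs p) = s p k)
    (hϖt : ∀ p ∈ S, 0 < ϖt p ∧ Nat.Coprime (ϖt p) p ∧
      ∀ k, 1 ≤ k → t p (k + ϖt p) = t p k)
    (Θ : ℝ) :
    ∃ L : ℂ,
      Tendsto (fun X : ℕ =>
        (∑ k ∈ Finset.Icc 1 X,
          (((r k * ∏ p ∈ S, ((((p : ℝ) ^ padicValNat p k)⁻¹) ^ (s p k) *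
              (p : ℝ) ^ (-(t p k) * (p : ℝ) ^ padicValNat p k))) : ℝ) : ℂ) *
            Complex.exp (Complex.I * (k : ℂ) * (Θ : ℂ))) / (X : ℂ))
        atTop (𝓝 L) ∧
      ((¬ ∃ q : ℚ, Θ = 2 * Real.pi * (q : ℝ)) → L = 0) := by
  classical
  set a : ℕ → ℝ := fun k => r k * ∏ p ∈ S, ((((p : ℝ) ^ padicValNat p k)⁻¹) ^ (s p k) *
      (p : ℝ) ^ (-(t p k) * (p : ℝ) ^ padicValNat p k)) with ha
  set w : ℂ := Complex.exp (Complex.I * (Θ : ℂ)) with hwdef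
  have hw : ‖w‖ = 1 := by
    rw [hwdef, Complex.norm_exp]
    simp
  have hexp : ∀ k : ℕ, Complex.exp (Complex.I * (k : ℂ) * (Θ : ℂ)) = w ^ k := by
    intro k
    rw [hwdef, ← Complex.exp_nat_mul]
    congr 1
    ring
  set f : ℕ → ℂ := fun X => (∑ k ∈ Finset.Icc 1 X, ((a k : ℝ) : ℂ) * w ^ k) / (X : ℂ) with hf
  show ∃ L : ℂ,
      Tendsto (fun X : ℕ => (∑ k ∈ Finset.Icc 1 X,
        ((a k : ℝ) : ℂ) * Complex.exp (Complex.I * (k : ℂ) * (Θ : ℂ))) / (X : ℂ))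
        atTop (𝓝 L) ∧
      ((¬ ∃ q : ℚ, Θ = 2 * Real.pi * (q : ℝ)) → L = 0)
  have hgoal : (fun X : ℕ => (∑ k ∈ Finset.Icc 1 X,
      ((a k : ℝ) : ℂ) * Complex.exp (Complex.I * (k : ℂ) * (Θ : ℂ))) / (X : ℂ)) = f := by
    funext X
    simp only [hexp, hf]
  rw [hgoal]
  set B : ℝ := ∑ j ∈ Finset.Icc 1 ϖr, r j with hB
  have hB0 : 0 ≤ B := Finset.sum_nonneg fun j hj =>
    le_of_lt (hrpos j (Finset.mem_Icc.mp hj).1)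
  have hrB : ∀ k, 1 ≤ k → r k ≤ B := by
    intro k hk
    obtain ⟨j, hj1, hj2, hj3⟩ := per_rep r ϖr hϖr hrper k hk
    rw [hj3]
    exact Finset.single_le_sum (f := fun j => r j)
      (fun i hi => le_of_lt (hrpos i (Finset.mem_Icc.mp hi).1))
      (Finset.mem_Icc.mpr ⟨hj1, hj2⟩)
  have hfactor : ∀ p ∈ S, ∀ k, 1 ≤ k →
      0 ≤ (((p : ℝ) ^ padicValNat p k)⁻¹) ^ (s p k) *
        (p : ℝ) ^ (-(t p k) * (p : ℝ) ^ padicValNat p k) ∧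
      (((p : ℝ) ^ padicValNat p k)⁻¹) ^ (s p k) *
        (p : ℝ) ^ (-(t p k) * (p : ℝ) ^ padicValNat p k) ≤ 1 := by
    intro p hp k hk
    have hp2 : 2 ≤ p := (hS p hp).two_le
    have hp1 : (1:ℝ) ≤ p := by exact_mod_cast Nat.one_le_of_lt hp2
    have hpow1 : (1:ℝ) ≤ (p:ℝ) ^ padicValNat p k := one_le_pow₀ hp1
    have hpowpos : (0:ℝ) < (p:ℝ) ^ padicValNat p k := by positivity
    have hx0 : 0 ≤ (((p : ℝ) ^ padicValNat p k)⁻¹) ^ (s p k) :=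
      Real.rpow_nonneg (by positivity) _
    have hx1 : (((p : ℝ) ^ padicValNat p k)⁻¹) ^ (s p k) ≤ 1 :=
      Real.rpow_le_one (by positivity) (inv_le_one_of_one_le₀ hpow1) (hs0 p hp k hk)
    have hy0 : 0 ≤ (p : ℝ) ^ (-(t p k) * (p : ℝ) ^ padicValNat p k) :=
      Real.rpow_nonneg (by positivity) _
    have hy1 : (p : ℝ) ^ (-(t p k) * (p : ℝ) ^ padicValNat p k) ≤ 1 := by
      apply Real.rpow_le_one_of_one_le_of_nonpos hp1
      have := ht0 p hp k hk
      nlinarith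
    exact ⟨mul_nonneg hx0 hy0, by nlinarith⟩
  have haB : ∀ k, 1 ≤ k → 0 ≤ a k ∧ a k ≤ B := by
    intro k hk
    have hprod0 : 0 ≤ ∏ p ∈ S, ((((p : ℝ) ^ padicValNat p k)⁻¹) ^ (s p k) *
        (p : ℝ) ^ (-(t p k) * (p : ℝ) ^ padicValNat p k)) :=
      Finset.prod_nonneg fun p hp => (hfactor p hp k hk).1
    have hprod1 : (∏ p ∈ S, ((((p : ℝ) ^ padicValNat p k)⁻¹) ^ (s p k) *
        (p : ℝ) ^ (-(t p k) * (p : ℝ) ^ padicValNat p k))) ≤ 1 :=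
      Finset.prod_le_one (fun p hp => (hfactor p hp k hk).1)
        (fun p hp => (hfactor p hp k hk).2)
    have hrk := hrpos k hk
    constructor
    · exact mul_nonneg (le_of_lt hrk) hprod0
    · calc a k ≤ r k * 1 := by
            rw [ha]
            exact mul_le_mul_of_nonneg_left hprod1 (le_of_lt hrk)
      _ = r k := mul_one _
      _ ≤ B := hrB k hk
  have key : ∀ ε : ℝ, 0 < ε → ∃ (gg : ℕ → ℂ) (L' : ℂ),
      Tendsto gg atTop (𝓝 L') ∧ (∀ᶠ X in atTop, ‖f X - gg X‖ ≤ ε) ∧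
      ((¬ ∃ q : ℚ, Θ = 2 * Real.pi * (q : ℝ)) → L' = 0) := by
    intro ε hε
    obtain ⟨V, hV⟩ : ∃ V : ℕ, B * S.card / 2 ^ V < ε := by
      obtain ⟨V, hV⟩ := pow_unbounded_of_one_lt (B * S.card / ε) (one_lt_two (α := ℝ))
      refine ⟨V, ?_⟩
      rw [div_lt_iff₀ (by positivity : (0:ℝ) < 2 ^ V)]
      rw [div_lt_iff₀ hε] at hV
      linarith
    set c : ℕ → ℝ := fun k => r k * ∏ p ∈ S,
      (if p ^ V ∣ k then 0 else ((((p : ℝ) ^ padicValNat p k)⁻¹) ^ (s p k) *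
        (p : ℝ) ^ (-(t p k) * (p : ℝ) ^ padicValNat p k))) with hc
    set M : ℕ := ϖr * ((∏ p ∈ S, ϖs p * ϖt p) * ∏ p ∈ S, p ^ V) with hMdef
    have hM0 : 0 < M := by
      rw [hMdef]
      apply Nat.mul_pos hϖr
      apply Nat.mul_pos
      · exact Finset.prod_pos fun p hp => Nat.mul_pos (hϖs p hp).1 (hϖt p hp).1
      · exact Finset.prod_pos fun p hp => pow_pos (hS p hp).pos V
    have hϖrM : ϖr ∣ M := ⟨_, rfl⟩
    have hsM : ∀ p ∈ S, ϖs p ∣ M := by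
      intro p hp
      refine Dvd.dvd.mul_left ?_ ϖr
      have h1 : ϖs p ∣ ϖs p * ϖt p := dvd_mul_right _ _
      have h2 : (ϖs p * ϖt p) ∣ ∏ q ∈ S, ϖs q * ϖt q :=
        Finset.dvd_prod_of_mem (fun q => ϖs q * ϖt q) hp
      exact dvd_mul_of_dvd_left (h1.trans h2) _
    have htM : ∀ p ∈ S, ϖt p ∣ M := by
      intro p hp
      refine Dvd.dvd.mul_left ?_ ϖr
      have h1 : ϖt p ∣ ϖs p * ϖt p := dvd_mul_left _ _
      have h2 : (ϖs p * ϖt p) ∣ ∏ q ∈ S, ϖs q * ϖt q :=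
        Finset.dvd_prod_of_mem (fun q => ϖs q * ϖt q) hp
      exact dvd_mul_of_dvd_left (h1.trans h2) _
    have hpVM : ∀ p ∈ S, p ^ V ∣ M := by
      intro p hp
      refine Dvd.dvd.mul_left ?_ ϖr
      exact dvd_mul_of_dvd_right (Finset.dvd_prod_of_mem (fun q => q ^ V) hp) _
    have hcper : ∀ k, 1 ≤ k → c (k + M) = c k := by
      intro k hk
      simp only [hc]
      congr 1
      · exact per_dvd r ϖr M hϖrM hrper k hk
      · apply Finset.prod_congr rfl
        intro p hp
        have hpV := hpVM p hp
        by_cases hdv : p ^ V ∣ k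
        · rw [if_pos (dvd_add hdv hpV), if_pos hdv]
        · have hndv2 : ¬ p ^ V ∣ k + M := by
            intro hcon
            apply hdv
            have := Nat.dvd_sub hcon hpV
            simpa using this
          rw [if_neg hndv2, if_neg hdv]
          rw [padic_stable p (hS p hp) V k M hk hdv hpV,
            per_dvd (s p) (ϖs p) M (hsM p hp) (hϖs p hp).2.2 k hk,
            per_dvd (t p) (ϖt p) M (htM p hp) (hϖt p hp).2.2 k hk]
    have crep : ∀ k, 1 ≤ k → c k = (if k % M = 0 then c M else c (k % M)) := by
      intro k
      induction k using Nat.strong_induction_on with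
      | _ k ih =>
        intro hk
        by_cases h1 : k < M
        · rw [Nat.mod_eq_of_lt h1, if_neg (by omega)]
        · push_neg at h1
          by_cases h2 : k = M
          · subst h2
            rw [Nat.mod_self, if_pos rfl]
          · have hk1 : 1 ≤ k - M := by omega
            have hper : c ((k - M) + M) = c (k - M) := hcper _ hk1
            rw [Nat.sub_add_cancel (by omega)] at hper
            rw [hper, ih (k - M) (by omega) hk1]
            have hmod : k % M = (k - M) % M := Nat.mod_eq_sub_mod h1
            rw [hmod]
    set G : ℕ → ℂ := fun j => if j = 0 then ((c M : ℝ) : ℂ) else ((c j : ℝ) : ℂ) with hG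
    have hcG : ∀ k, 1 ≤ k → ((c k : ℝ) : ℂ) = G (k % M) := by
      intro k hk
      rw [crep k hk, hG]
      by_cases h0 : k % M = 0
      · simp [h0]
      · simp [h0]
    set gg : ℕ → ℂ := fun X => (∑ k ∈ Finset.Icc 1 X, ((c k : ℝ) : ℂ) * w ^ k) / (X : ℂ)
      with hgg
    obtain ⟨L', hL'1, hL'2⟩ := periodic_cesaro M hM0 G w hw
      (fun k => G (k % M) * w ^ k) (fun k => rfl)
    have hggtend : Tendsto gg atTop (𝓝 L') := by
      have heq : gg = fun X : ℕ => (∑ k ∈ Finset.Icc 1 X, G (k % M) * w ^ k) / (X : ℂ) := by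
        funext X
        show (∑ k ∈ Finset.Icc 1 X, ((c k : ℝ) : ℂ) * w ^ k) / (X : ℂ)
            = (∑ k ∈ Finset.Icc 1 X, G (k % M) * w ^ k) / (X : ℂ)
        congr 1
        apply Finset.sum_congr rfl
        intro k hk
        rw [hcG k (Finset.mem_Icc.mp hk).1]
      rw [heq]
      exact hL'1
    refine ⟨gg, L', hggtend, ?_, ?_⟩
    · filter_upwards [eventually_ge_atTop 1] with X hX
      have hXpos : (0:ℝ) < X := by exact_mod_cast Nat.pos_of_ne_zero (by omega)
      have hfg : f X - gg X
          = (∑ k ∈ Finset.Icc 1 X, (((a k - c k : ℝ)) : ℂ) * w ^ k) / (X : ℂ) := by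
        rw [hf, hgg, div_sub_div_same, ← Finset.sum_sub_distrib]
        congr 1
        apply Finset.sum_congr rfl
        intro k hk
        push_cast
        ring
      rw [hfg, norm_div, Complex.norm_natCast]
      rw [div_le_iff₀ hXpos]
      have hpt : ∀ k ∈ Finset.Icc 1 X, ‖(((a k - c k : ℝ)) : ℂ) * w ^ k‖
          ≤ ∑ p ∈ S, (if p ^ V ∣ k then B else 0) := by
        intro k hk
        have hk1 : 1 ≤ k := (Finset.mem_Icc.mp hk).1
        have hnorm : ‖(((a k - c k : ℝ)) : ℂ) * w ^ k‖ = |a k - c k| := by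
          rw [norm_mul, norm_pow, hw, one_pow, mul_one, Complex.norm_real,
            Real.norm_eq_abs]
        rw [hnorm]
        by_cases hex : ∃ p ∈ S, p ^ V ∣ k
        · obtain ⟨p, hp, hdv⟩ := hex
          have hc0 : c k = 0 := by
            have hprod0 : (∏ q ∈ S, (if q ^ V ∣ k then (0:ℝ)
                else (((q : ℝ) ^ padicValNat q k)⁻¹) ^ (s q k) *
                  (q : ℝ) ^ (-(t q k) * (q : ℝ) ^ padicValNat q k))) = 0 :=
              Finset.prod_eq_zero hp (if_pos hdv)
            simp only [hc]
            rw [hprod0, mul_zero]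
          rw [hc0, sub_zero, abs_of_nonneg (haB k hk1).1]
          calc a k ≤ B := (haB k hk1).2
          _ = (if p ^ V ∣ k then B else 0) := (if_pos hdv).symm
          _ ≤ ∑ p ∈ S, (if p ^ V ∣ k then B else 0) :=
              Finset.single_le_sum (f := fun p => if p ^ V ∣ k then B else 0)
                (fun i _ => by
                  show (0:ℝ) ≤ if i ^ V ∣ k then B else 0
                  split <;> simp [hB0]) hp
        · push_neg at hex
          have hac : a k = c k := by
            simp only [ha, hc]
            congr 1
            apply Finset.prod_congr rfl
            intro p hp
            rw [if_neg (hex p hp)]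
          rw [hac, sub_self, abs_zero]
          exact Finset.sum_nonneg fun p _ => by
            show (0:ℝ) ≤ if p ^ V ∣ k then B else 0
            split <;> simp [hB0]
      calc ‖∑ k ∈ Finset.Icc 1 X, (((a k - c k : ℝ)) : ℂ) * w ^ k‖
          ≤ ∑ k ∈ Finset.Icc 1 X, ‖(((a k - c k : ℝ)) : ℂ) * w ^ k‖ := norm_sum_le _ _
      _ ≤ ∑ k ∈ Finset.Icc 1 X, ∑ p ∈ S, (if p ^ V ∣ k then B else 0) :=
          Finset.sum_le_sum hpt
      _ = ∑ p ∈ S, ∑ k ∈ Finset.Icc 1 X, (if p ^ V ∣ k then B else 0) := Finset.sum_comm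
      _ ≤ ∑ p ∈ S, B * ((X : ℝ) / 2 ^ V) := by
          apply Finset.sum_le_sum
          intro p hp
          have hp2 : 2 ≤ p := (hS p hp).two_le
          have hcard : (Finset.filter (fun k => p ^ V ∣ k) (Finset.Icc 1 X)).card
              = X / p ^ V := by
            have hIoc : Finset.Icc 1 X = Finset.Ioc 0 X := (Finset.Icc_add_one_left_eq_Ioc 0 X)
            rw [hIoc]
            exact Nat.Ioc_filter_dvd_card_eq_div X (p ^ V)
          have hsum : ∑ k ∈ Finset.Icc 1 X, (if p ^ V ∣ k then B else 0)
              = ((X / p ^ V : ℕ) : ℝ) * B := by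
            rw [Finset.sum_ite, Finset.sum_const_zero, add_zero, Finset.sum_const,
              nsmul_eq_mul, hcard]
          rw [hsum]
          have hd1 : ((X / p ^ V : ℕ) : ℝ) ≤ (X : ℝ) / ((p ^ V : ℕ) : ℝ) := Nat.cast_div_le
          have hd2 : (X : ℝ) / ((p : ℝ) ^ V) ≤ (X : ℝ) / 2 ^ V := by
            apply div_le_div_of_nonneg_left (le_of_lt hXpos) (by positivity)
            exact pow_le_pow_left₀ (by norm_num) (by exact_mod_cast hp2) V
          calc ((X / p ^ V : ℕ) : ℝ) * B ≤ ((X : ℝ) / ((p ^ V : ℕ) : ℝ)) * B :=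
                mul_le_mul_of_nonneg_right hd1 hB0
          _ = ((X : ℝ) / ((p:ℝ) ^ V)) * B := by push_cast; ring
          _ ≤ ((X : ℝ) / 2 ^ V) * B := mul_le_mul_of_nonneg_right hd2 hB0
          _ = B * ((X : ℝ) / 2 ^ V) := by ring
      _ = S.card * (B * ((X : ℝ) / 2 ^ V)) := by
          rw [Finset.sum_const, nsmul_eq_mul]
      _ = (B * S.card / 2 ^ V) * X := by ring
      _ ≤ ε * X := mul_le_mul_of_nonneg_right (le_of_lt hV) (le_of_lt hXpos)
    · intro hΘ
      apply hL'2
      intro hone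
      apply hΘ
      rw [hwdef, ← Complex.exp_nat_mul] at hone
      obtain ⟨n, hn⟩ := Complex.exp_eq_one_iff.mp hone
      have h7 : Complex.I * ((M : ℂ) * Θ) = Complex.I * ((n : ℂ) * (2 * (π : ℂ))) := by
        linear_combination hn
      have h8 : (M : ℂ) * (Θ : ℂ) = (n : ℂ) * (2 * (π : ℂ)) :=
        mul_left_cancel₀ Complex.I_ne_zero h7
      have h9 : (M : ℝ) * Θ = (n : ℝ) * (2 * π) := by exact_mod_cast h8
      refine ⟨(n : ℚ) / (M : ℚ), ?_⟩
      have hM' : (M : ℝ) ≠ 0 := Nat.cast_ne_zero.mpr (by omega)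
      have hcast : (((n : ℚ) / (M : ℚ) : ℚ) : ℝ) = (n : ℝ) / (M : ℝ) := by push_cast; ring
      rw [hcast]
      field_simp
      linarith [h9]
  obtain ⟨L, hL⟩ := tendsto_of_approx f (by
    intro ε hε
    obtain ⟨gg, L', h1, h2, _⟩ := key ε hε
    exact ⟨gg, ⟨L', h1⟩, h2⟩)
  refine ⟨L, hL, ?_⟩
  intro hΘ
  apply limit_zero_of_approx f L hL
  intro ε hε
  obtain ⟨gg, L', h1, h2, h3⟩ := key ε hε
  rw [h3 hΘ] at h1
  exact ⟨gg, h1, h2⟩
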